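/- Error probability per evaluation point after Razborov–Smolensky with β+2 combinations: Let q be a prime power, P₁,…,P_m ∈ F_q[X₁,…,X_n], and fix y ∈ F_q^{n-β}. Let P̃₁,…,P̃_{β+2} be independent uniform random F_q-linear combinations of P₁,…,P_m, let F_j := ∏_{i=1}^{β+2}(1 - P̃_i^{q-1}), F := ∏_{i=1}^m (1 - P_i^{q-1}), and define Z_{β,j}(y) := ∑_{z ∈ F_q^β} F_j(y,z) and Z_β(y) := ∑_{z ∈ F_q^β} F(y,z). Then Pr[Z_{β,j}(y) ≠ Z_β(y)] ≤ q^{-2}. -/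

import Mathlib

open MvPolynomial Finset

private lemma card_ker_le {K : Type*} [Field K] [Fintype K] [DecidableEq K] {m : ℕ}
    (c : Fin m → K) (i₀ : Fin m) (hc : c i₀ ≠ 0) :
    ((univ : Finset (Fin m → K)).filter (fun v => ∑ i, v i * c i = 0)).card
      ≤ Fintype.card K ^ (m - 1) := by
  have h : ((univ : Finset (Fin m → K)).filter (fun v => ∑ i, v i * c i = 0)).card
      ≤ Fintype.card ({i : Fin m // i ≠ i₀} → K) := by
    rw [← Finset.card_univ]
    apply Finset.card_le_card_of_injOn (fun v (i : {i : Fin m // i ≠ i₀}) => v i.1)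
      (fun _ _ => Finset.mem_univ _)
    intro v hv w hw hvw
    simp only [mem_coe, mem_filter, mem_univ, true_and] at hv hw
    funext i
    by_cases hi : i = i₀
    · subst hi
      have he : ∑ j ∈ univ.erase i, v j * c j = ∑ j ∈ univ.erase i, w j * c j := by
        refine Finset.sum_congr rfl fun j hj => ?_
        have hj' : j ≠ i := (Finset.mem_erase.1 hj).1
        have := congrFun hvw ⟨j, hj'⟩
        simp only at this
        rw [this]
      have h1 : v i * c i + ∑ j ∈ univ.erase i, v j * c j = 0 := by
        rw [Finset.add_sum_erase univ (fun j => v j * c j) (mem_univ i)]; exact hv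
      have h2 : w i * c i + ∑ j ∈ univ.erase i, w j * c j = 0 := by
        rw [Finset.add_sum_erase univ (fun j => w j * c j) (mem_univ i)]; exact hw
      have : v i * c i = w i * c i := by
        rw [he] at h1
        linear_combination h1 - h2
      exact mul_right_cancel₀ hc this
    · exact congrFun hvw ⟨i, hi⟩
  calc _ ≤ Fintype.card ({i : Fin m // i ≠ i₀} → K) := h
    _ = Fintype.card K ^ Fintype.card {i : Fin m // i ≠ i₀} := Fintype.card_fun
    _ = Fintype.card K ^ (m - 1) := by
        congr 1
        have : Fintype.card {i : Fin m // i ≠ i₀} = Fintype.card (Fin m) - 1 := by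
          simp [Fintype.card_subtype_compl]
        simp only [Fintype.card_fin] at this; exact this

theorem razborov_smolensky_partial_sum_error (K : Type*) [Field K] [Fintype K]
    [DecidableEq K] (a β m : ℕ)
    (P : Fin m → MvPolynomial (Fin a ⊕ Fin β) K) (y : Fin a → K) :
    ((univ : Finset (Fin (β + 2) → Fin m → K)).filter
        (fun ρ =>
          (∑ z : Fin β → K, eval (Sum.elim y z)
              (∏ j : Fin (β + 2),
                (1 - (∑ i, C (ρ j i) * P i) ^ (Fintype.card K - 1))))
          ≠ ∑ z : Fin β → K, eval (Sum.elim y z)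
              (∏ i, (1 - P i ^ (Fintype.card K - 1))))).card
        * Fintype.card K ^ 2
      ≤ Fintype.card K ^ ((β + 2) * m) := by
  classical
  set q := Fintype.card K with hq
  have hq2 : 2 ≤ q := Fintype.one_lt_card
  have hq1 : q - 1 ≠ 0 := by omega
  set p : (Fin β → K) → Fin m → K := fun z i => eval (Sum.elim y z) (P i) with hp
  -- evaluation of F_ρ and F
  have hevalρ : ∀ (ρ : Fin (β + 2) → Fin m → K) (z : Fin β → K),
      eval (Sum.elim y z) (∏ j : Fin (β + 2),
          (1 - (∑ i, C (ρ j i) * P i) ^ (q - 1)))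
        = ∏ j : Fin (β + 2), (1 - (∑ i, ρ j i * p z i) ^ (q - 1)) := by
    intro ρ z
    simp [map_prod, map_sum, hp]
  have hevalF : ∀ (z : Fin β → K),
      eval (Sum.elim y z) (∏ i, (1 - P i ^ (q - 1)))
        = ∏ i, (1 - (p z i) ^ (q - 1)) := by
    intro z
    simp [map_prod, hp]
  set B : (Fin β → K) → Finset (Fin (β + 2) → Fin m → K) := fun z =>
    (univ : Finset (Fin (β + 2) → Fin m → K)).filter
      (fun ρ => ∏ j : Fin (β + 2), (1 - (∑ i, ρ j i * p z i) ^ (q - 1))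
          ≠ ∏ i, (1 - (p z i) ^ (q - 1))) with hB
  -- bad set contained in union
  have hsub : ((univ : Finset (Fin (β + 2) → Fin m → K)).filter
        (fun ρ =>
          (∑ z : Fin β → K, eval (Sum.elim y z)
              (∏ j : Fin (β + 2),
                (1 - (∑ i, C (ρ j i) * P i) ^ (q - 1))))
          ≠ ∑ z : Fin β → K, eval (Sum.elim y z)
              (∏ i, (1 - P i ^ (q - 1)))))
      ⊆ (univ : Finset (Fin β → K)).biUnion B := by
    intro ρ hρ
    simp only [mem_filter, mem_univ, true_and] at hρ
    by_contra hcon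
    simp only [mem_biUnion, mem_univ, true_and, hB, mem_filter, not_exists, not_not] at hcon
    exact hρ (Finset.sum_congr rfl fun z _ => by
      rw [hevalρ, hevalF]; exact hcon z)
  -- pointwise bound
  have hBz : ∀ z : Fin β → K, (B z).card * q ^ (β + 2) ≤ q ^ ((β + 2) * m) := by
    intro z
    by_cases hz : ∀ i, p z i = 0
    · have : B z = ∅ := by
        rw [Finset.eq_empty_iff_forall_notMem]
        intro ρ hρ
        simp only [hB, mem_filter, mem_univ, true_and] at hρ
        apply hρ
        have hs : ∀ j : Fin (β + 2), (∑ i, ρ j i * p z i) = 0 := by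
          intro j; simp [hz]
        have h1 : ∏ j : Fin (β + 2), (1 - (∑ i, ρ j i * p z i) ^ (q - 1)) = 1 :=
          Finset.prod_eq_one fun j _ => by rw [hs j, zero_pow hq1, sub_zero]
        have h2 : ∏ i, (1 - (p z i) ^ (q - 1)) = 1 :=
          Finset.prod_eq_one fun i _ => by rw [hz i, zero_pow hq1, sub_zero]
        rw [h1, h2]
      simp [this]
    · push_neg at hz
      obtain ⟨i₀, hi₀⟩ := hz
      have hm : 1 ≤ m := i₀.pos
      -- B z ⊆ piFinset of kernels
      have hsub2 : B z ⊆ Fintype.piFinset (fun _ : Fin (β + 2) =>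
          (univ : Finset (Fin m → K)).filter (fun v => ∑ i, v i * p z i = 0)) := by
        intro ρ hρ
        simp only [hB, mem_filter, mem_univ, true_and] at hρ
        rw [Fintype.mem_piFinset]
        intro j
        simp only [mem_filter, mem_univ, true_and]
        by_contra hne
        apply hρ
        have hF : ∏ i, (1 - (p z i) ^ (q - 1)) = 0 := by
          apply Finset.prod_eq_zero (mem_univ i₀)
          rw [FiniteField.pow_card_sub_one_eq_one _ hi₀, sub_self]
        have hFρ : ∏ j' : Fin (β + 2), (1 - (∑ i, ρ j' i * p z i) ^ (q - 1)) = 0 := by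
          apply Finset.prod_eq_zero (mem_univ j)
          rw [FiniteField.pow_card_sub_one_eq_one _ hne, sub_self]
        rw [hF, hFρ]
      have hcard : (B z).card ≤ (q ^ (m - 1)) ^ (β + 2) := by
        calc (B z).card ≤ _ := Finset.card_le_card hsub2
          _ = ((univ : Finset (Fin m → K)).filter
                (fun v => ∑ i, v i * p z i = 0)).card ^ (β + 2) := by
              rw [Fintype.card_piFinset_const]
          _ ≤ (q ^ (m - 1)) ^ (β + 2) :=
              Nat.pow_le_pow_left (card_ker_le _ i₀ hi₀) _
      calc (B z).card * q ^ (β + 2) ≤ (q ^ (m - 1)) ^ (β + 2) * q ^ (β + 2) :=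
            Nat.mul_le_mul_right _ hcard
        _ = q ^ ((m - 1) * (β + 2) + (β + 2)) := by rw [← pow_mul, ← pow_add]
        _ = q ^ ((β + 2) * m) := by
            obtain ⟨k, rfl⟩ : ∃ k, m = k + 1 := ⟨m - 1, by omega⟩
            congr 1
            simp only [Nat.add_sub_cancel]
            ring
  -- combine
  have hbadcard : (((univ : Finset (Fin (β + 2) → Fin m → K)).filter
        (fun ρ =>
          (∑ z : Fin β → K, eval (Sum.elim y z)
              (∏ j : Fin (β + 2),
                (1 - (∑ i, C (ρ j i) * P i) ^ (q - 1))))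
          ≠ ∑ z : Fin β → K, eval (Sum.elim y z)
              (∏ i, (1 - P i ^ (q - 1)))))).card
      ≤ ∑ z : Fin β → K, (B z).card :=
    le_trans (Finset.card_le_card hsub) (Finset.card_biUnion_le)
  have hqβ : 0 < q ^ β := by positivity
  refine Nat.le_of_mul_le_mul_right ?_ hqβ
  have key : (((univ : Finset (Fin (β + 2) → Fin m → K)).filter
        (fun ρ =>
          (∑ z : Fin β → K, eval (Sum.elim y z)
              (∏ j : Fin (β + 2),
                (1 - (∑ i, C (ρ j i) * P i) ^ (q - 1))))
          ≠ ∑ z : Fin β → K, eval (Sum.elim y z)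
              (∏ i, (1 - P i ^ (q - 1)))))).card * q ^ (β + 2)
      ≤ q ^ ((β + 2) * m) * q ^ β := by
    calc _ ≤ (∑ z : Fin β → K, (B z).card) * q ^ (β + 2) :=
          Nat.mul_le_mul_right _ hbadcard
      _ = ∑ z : Fin β → K, (B z).card * q ^ (β + 2) := Finset.sum_mul _ _ _
      _ ≤ ∑ _z : Fin β → K, q ^ ((β + 2) * m) := Finset.sum_le_sum fun z _ => hBz z
      _ = q ^ ((β + 2) * m) * q ^ β := by
          rw [Finset.sum_const, Finset.card_univ, smul_eq_mul, mul_comm]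
          congr 1
          simp [Fintype.card_fun, hq]
  calc _ * q ^ 2 * q ^ β = _ * q ^ (β + 2) := by
        rw [mul_assoc, ← pow_add, Nat.add_comm 2 β]
    _ ≤ q ^ ((β + 2) * m) * q ^ β := key
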